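/- Decomposition of delay-plus-window element: for integers d ≥ 1 and real w > 0, with w' = w/d, the bivariate function δ_d ⊗ δ^{+w} equals the d-fold self-convolution (δ_1 ⊗ δ^{+w'})^(d). -/
import Mathlib


open scoped ENNReal NNReal

/-- Min-plus convolution of bivariate functions. -/
noncomputable def conv (f g : ℕ → ℕ → ℝ≥0∞) : ℕ → ℕ → ℝ≥0∞ :=
  fun s t => ⨅ τ ∈ Finset.Icc s t, f s τ + g τ t

/-- The neutral element δ : δ(s,t)=0 if s ≥ t, ∞ otherwise. -/
noncomputable def delta : ℕ → ℕ → ℝ≥0∞ := fun s t => if t ≤ s then 0 else ∞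

/-- n-fold self-convolution: f^(0) = δ, f^(n+1) = f^(n) ⊗ f. -/
noncomputable def convPow (f : ℕ → ℕ → ℝ≥0∞) : ℕ → ℕ → ℕ → ℝ≥0∞
  | 0 => delta
  | n + 1 => conv (convPow f n) f

/-- Subadditive subClosure f* = inf over n of f^(n). -/
noncomputable def subClosure (f : ℕ → ℕ → ℝ≥0∞) : ℕ → ℕ → ℝ≥0∞ :=
  fun s t => ⨅ n : ℕ, convPow f n s t

/-- Delay element: δ_d(s,t) = 0 if s ≥ t − d, ∞ otherwise. -/
noncomputable def deltaD (d : ℕ) : ℕ → ℕ → ℝ≥0∞ := fun s t => if t ≤ s + d then 0 else ∞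

/-- Window element: δ^{+w}(s,t) = w if s ≥ t, ∞ otherwise. -/
noncomputable def deltaW (w : ℝ≥0∞) : ℕ → ℕ → ℝ≥0∞ := fun s t => if t ≤ s then w else ∞

lemma conv_apply (f g : ℕ → ℕ → ℝ≥0∞) (s t : ℕ) :
    conv f g s t = ⨅ τ ∈ Finset.Icc s t, f s τ + g τ t := rfl

lemma conv_eval (dd : ℕ) (w : ℝ≥0∞) (s t : ℕ) :
    conv (deltaD dd) (deltaW w) s t = if s ≤ t ∧ t ≤ s + dd then w else ∞ := by
  unfold conv deltaD deltaW
  split_ifs with h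
  · obtain ⟨h1, h2⟩ := h
    apply le_antisymm
    · refine (iInf₂_le t ?_).trans ?_
      · simp [Finset.mem_Icc, h1]
      · simp [h2]
    · refine le_iInf₂ fun τ hτ => ?_
      rw [Finset.mem_Icc] at hτ
      by_cases ht : t ≤ τ
      · have : τ = t := le_antisymm hτ.2 ht
        subst this
        simp [h2]
      · simp [ht]
  · rw [eq_top_iff]
    refine le_iInf₂ fun τ hτ => ?_
    rw [Finset.mem_Icc] at hτ
    by_cases ht : t ≤ τ
    · have : τ = t := le_antisymm hτ.2 ht
      subst this
      have : ¬ τ ≤ s + dd := by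
        intro hc; exact h ⟨hτ.1, hc⟩
      simp [this]
    · simp [ht]

lemma pow_eval (w' : ℝ≥0∞) : ∀ n s t, s ≤ t →
    convPow (conv (deltaD 1) (deltaW w')) n s t
      = if t ≤ s + n then (n : ℝ≥0∞) * w' else ∞ := by
  intro n
  induction n with
  | zero =>
    intro s t hst
    simp only [convPow, delta]
    by_cases h : t ≤ s
    · have : t = s := le_antisymm h hst
      subst this; simp
    · have : ¬ t ≤ s + 0 := by omega
      simp [h, this]
  | succ n ih =>
    intro s t hst
    show conv _ _ s t = _
    rw [conv_apply]
    have hf : ∀ τ t', conv (deltaD 1) (deltaW w') τ t' = if τ ≤ t' ∧ t' ≤ τ + 1 then w' else ∞ :=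
      fun τ t' => conv_eval 1 w' τ t'
    by_cases h : t ≤ s + (n + 1)
    · rw [if_pos h]
      apply le_antisymm
      · set τ0 := max s (t - 1) with hτ0
        have hmem : τ0 ∈ Finset.Icc s t := by
          rw [Finset.mem_Icc]; constructor <;> omega
        refine (iInf₂_le τ0 hmem).trans ?_
        rw [ih s τ0 (by omega), hf]
        have h1 : τ0 ≤ s + n := by omega
        have h2 : τ0 ≤ t ∧ t ≤ τ0 + 1 := by omega
        rw [if_pos h1, if_pos h2]
        push_cast
        rw [add_mul, one_mul]
      · refine le_iInf₂ fun τ hτ => ?_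
        rw [Finset.mem_Icc] at hτ
        rw [ih s τ hτ.1, hf]
        by_cases h1 : τ ≤ s + n
        · by_cases h2 : τ ≤ t ∧ t ≤ τ + 1
          · rw [if_pos h1, if_pos h2]
            push_cast
            rw [add_mul, one_mul]
          · simp [h2]
        · simp [h1]
    · rw [if_neg h, eq_top_iff]
      refine le_iInf₂ fun τ hτ => ?_
      rw [Finset.mem_Icc] at hτ
      rw [ih s τ hτ.1, hf]
      by_cases h2 : τ ≤ t ∧ t ≤ τ + 1
      · have h1 : ¬ τ ≤ s + n := by omega
        simp [h1]
      · simp [h2]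

/-- decomposition of the delay-plus-window element:
δ_d ⊗ δ^{+w} = (δ_1 ⊗ δ^{+w/d})^(d) for d ≥ 1, w > 0. -/
theorem deltaD_deltaW_decomposition (d : ℕ) (hd : 1 ≤ d) (w : ℝ≥0) (hw : 0 < w) :
    ∀ s t : ℕ, s ≤ t →
      conv (deltaD d) (deltaW (w : ℝ≥0∞)) s t
        = convPow (conv (deltaD 1) (deltaW ((w / (d : ℝ≥0) : ℝ≥0) : ℝ≥0∞))) d s t := by
  intro s t hst
  rw [conv_eval, pow_eval _ d s t hst]
  have hd0 : (d : ℝ≥0) ≠ 0 := by exact_mod_cast Nat.one_le_iff_ne_zero.mp hd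
  by_cases h : t ≤ s + d
  · rw [if_pos ⟨hst, h⟩, if_pos h]
    rw [show ((d : ℕ) : ℝ≥0∞) = ((d : ℝ≥0) : ℝ≥0∞) by push_cast; ring, ← ENNReal.coe_mul,
      mul_div_cancel₀ _ hd0]
  · rw [if_neg (by tauto), if_neg h]
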